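/- Let 1 ≤ p < ∞ and let v₀ : ℝ^{M×N} → ℝ be bounded with bound C₀, and set v(s) := v₀(s)(1+|s|^p). If there exists a continuous β : [0,∞) → [0,∞) with β(0)=0 such that |v(s)-v(t)| ≤ β(|s-t|/(1+|s|+|t|))·(1+|s|^p+|t|^p) for all s,t, then there exists a continuous α : [0,∞) → [0,∞) with α(0)=0 such that |v₀(s)-v₀(t)| ≤ α(|s-t|/(1+|s|+|t|)) for all s,t ∈ ℝ^{M×N}. -/

import Mathlib

open MeasureTheory Metric Filter
open scoped ENNReal Topology

noncomputable section

abbrev EN (N : ℕ) : Type := EuclideanSpace ℝ (Fin N)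
abbrev Mat (M N : ℕ) : Type := Matrix (Fin M) (Fin N) ℝ

/-- Frobenius norm on real `M × N` matrices. -/
def fnorm {M N : ℕ} (s : Mat M N) : ℝ := Real.sqrt (∑ i, ∑ j, (s i j) ^ 2)

/-- The matrix of partial derivatives (gradient) of `φ : ℝ^N → ℝ^M` at `x`,
computed via the Fréchet derivative (junk value `0` where `φ` is not differentiable). -/
def grad {M N : ℕ} (φ : EN N → EN M) (x : EN N) : Mat M N :=
  Matrix.of fun i j => fderiv ℝ φ x (EuclideanSpace.single j 1) i

lemma fnorm_eq {M N : ℕ} (s : Mat M N) :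
    fnorm s = ‖(WithLp.equiv 2 (Fin M × Fin N → ℝ)).symm (fun ij => s ij.1 ij.2)‖ := by
  rw [EuclideanSpace.norm_eq, fnorm]
  congr 1
  rw [Fintype.sum_prod_type]
  exact Finset.sum_congr rfl fun i _ => Finset.sum_congr rfl fun j _ => by
    simp [sq_abs]

lemma fnorm_nonneg {M N : ℕ} (s : Mat M N) : 0 ≤ fnorm s := Real.sqrt_nonneg _

lemma abs_fnorm_sub_le {M N : ℕ} (s t : Mat M N) :
    |fnorm s - fnorm t| ≤ fnorm (s - t) := by
  rw [fnorm_eq s, fnorm_eq t, fnorm_eq (s - t)]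
  have h : (WithLp.equiv 2 (Fin M × Fin N → ℝ)).symm (fun ij => (s - t) ij.1 ij.2)
      = (WithLp.equiv 2 (Fin M × Fin N → ℝ)).symm (fun ij => s ij.1 ij.2)
        - (WithLp.equiv 2 (Fin M × Fin N → ℝ)).symm (fun ij => t ij.1 ij.2) := rfl
  rw [h]
  exact abs_norm_sub_norm_le _ _

lemma fnorm_sub_comm {M N : ℕ} (s t : Mat M N) : fnorm (s - t) = fnorm (t - s) := by
  unfold fnorm
  congr 1
  refine Finset.sum_congr rfl fun i _ => Finset.sum_congr rfl fun j _ => ?_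
  simp [Matrix.sub_apply]; ring

lemma rpow_sub_rpow_le (p : ℝ) (hp : 1 ≤ p) {a b : ℝ} (hb : 0 ≤ b) (hba : b ≤ a) :
    a ^ p - b ^ p ≤ p * a ^ (p - 1) * (a - b) := by
  rcases eq_or_lt_of_le (hb.trans hba) with h | ha
  · have hb0 : b = 0 := le_antisymm (hba.trans h.symm.le) hb
    subst hb0
    rw [← h]
    simp [Real.zero_rpow (by linarith : p ≠ 0)]
  · have hx : (-1 : ℝ) ≤ b / a - 1 := by
      have : 0 ≤ b / a := div_nonneg hb ha.le
      linarith
    have hbern := one_add_mul_self_le_rpow_one_add hx hp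
    rw [show (1 : ℝ) + (b / a - 1) = b / a by ring] at hbern
    have hdiv : (b / a) ^ p = b ^ p / a ^ p := Real.div_rpow hb ha.le p
    have hap : (0:ℝ) < a ^ p := Real.rpow_pos_of_pos ha p
    have h1 : a ^ p * (1 + p * (b / a - 1)) ≤ b ^ p := by
      calc a ^ p * (1 + p * (b / a - 1)) ≤ a ^ p * (b / a) ^ p :=
            mul_le_mul_of_nonneg_left (hdiv ▸ hdiv.symm ▸ hbern) hap.le
        _ = b ^ p := by rw [hdiv]; field_simp
    have h2 : a ^ (p - 1) * a = a ^ p := by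
      rw [← Real.rpow_add_one (ne_of_gt ha) (p - 1)]; ring_nf
    have h3 : a ^ p * (b / a) = a ^ (p - 1) * b := by
      rw [← h2]; field_simp
    nlinarith [h1, h3]

set_option maxHeartbeats 1000000 in
lemma key_arith (p : ℝ) (hp : 1 ≤ p) (C₀ : ℝ) (hC₀ : 0 ≤ C₀)
    (a b d vs vt v0s v0t bd : ℝ)
    (ha : 0 ≤ a) (hb : 0 ≤ b) (hd : 0 ≤ d) (hts : b ≤ a)
    (habd : a - b ≤ d) (hv0t : |v0t| ≤ C₀)
    (hvs : vs = v0s * (1 + a ^ p)) (hvt : vt = v0t * (1 + b ^ p))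
    (hbd : 0 ≤ bd)
    (hβst : |vs - vt| ≤ bd * (1 + a ^ p + b ^ p)) :
    |v0s - v0t| ≤ 2 * bd + 3 * p * C₀ * (d / (1 + a + b)) := by
  have hp0 : (0:ℝ) < p := lt_of_lt_of_le one_pos hp
  have hden : (0:ℝ) < 1 + a + b := by linarith
  have hδ0 : 0 ≤ d / (1 + a + b) := div_nonneg hd hden.le
  have hdδ : d = d / (1 + a + b) * (1 + a + b) := by field_simp
  have hap : (0:ℝ) ≤ a ^ p := Real.rpow_nonneg ha p
  have hbp : (0:ℝ) ≤ b ^ p := Real.rpow_nonneg hb p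
  have h1ap : (0:ℝ) < 1 + a ^ p := by linarith
  have hba_p : b ^ p ≤ a ^ p := Real.rpow_le_rpow hb hts hp0.le
  have hap1 : (0:ℝ) ≤ a ^ (p - 1) := Real.rpow_nonneg ha _
  have hap1_le : a ^ (p - 1) ≤ 1 + a ^ p := by
    rcases le_total a 1 with h1 | h1
    · have := Real.rpow_le_one ha h1 (by linarith : (0:ℝ) ≤ p - 1)
      linarith
    · have := Real.rpow_le_rpow_of_exponent_le h1 (by linarith : p - 1 ≤ p)
      linarith
  have hap1a : a ^ (p - 1) * a ≤ a ^ p := by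
    rcases eq_or_lt_of_le ha with h | h
    · rw [← h]
      simp [Real.zero_rpow (ne_of_gt hp0)]
    · rw [← Real.rpow_add_one (ne_of_gt h) (p - 1)]
      ring_nf
      exact le_refl _
  have hap1b : a ^ (p - 1) * b ≤ a ^ p :=
    le_trans (mul_le_mul_of_nonneg_left hts hap1) hap1a
  have hfac : a ^ (p - 1) * (1 + a + b) ≤ 3 * (1 + a ^ p) := by nlinarith
  have hid : (v0s - v0t) * (1 + a ^ p) = (vs - vt) + v0t * (b ^ p - a ^ p) := by
    rw [hvs, hvt]; ring
  have habs : |v0s - v0t| * (1 + a ^ p) ≤ |vs - vt| + C₀ * (a ^ p - b ^ p) := by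
    have h1 : |v0s - v0t| * (1 + a ^ p) = |(v0s - v0t) * (1 + a ^ p)| := by
      rw [abs_mul, abs_of_pos h1ap]
    rw [h1, hid]
    calc |(vs - vt) + v0t * (b ^ p - a ^ p)|
        ≤ |vs - vt| + |v0t| * |b ^ p - a ^ p| := by
          refine le_trans (abs_add_le _ _) ?_
          rw [abs_mul]
      _ ≤ |vs - vt| + C₀ * (a ^ p - b ^ p) := by
          have he : |b ^ p - a ^ p| = a ^ p - b ^ p := by
            rw [abs_sub_comm, abs_of_nonneg (by linarith)]
          rw [he]
          nlinarith [abs_nonneg v0t]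
  have hterm1 : |vs - vt| ≤ bd * (2 * (1 + a ^ p)) := by
    refine le_trans hβst ?_
    have : 1 + a ^ p + b ^ p ≤ 2 * (1 + a ^ p) := by linarith
    exact mul_le_mul_of_nonneg_left this hbd
  have hterm2 : a ^ p - b ^ p ≤ 3 * p * (1 + a ^ p) * (d / (1 + a + b)) := by
    have h1 : a ^ p - b ^ p ≤ p * a ^ (p - 1) * (a - b) :=
      rpow_sub_rpow_le p hp hb hts
    have hpa : (0:ℝ) ≤ p * a ^ (p - 1) := by positivity
    have h2 : p * a ^ (p - 1) * (a - b) ≤ p * a ^ (p - 1) * d := by nlinarith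
    have h3 : p * a ^ (p - 1) * d
        = p * (a ^ (p - 1) * (1 + a + b)) * (d / (1 + a + b)) := by
      rw [mul_comm (a ^ (p - 1)) (1 + a + b)]
      field_simp
    have hpδ : (0:ℝ) ≤ p * (d / (1 + a + b)) := by positivity
    have h4 : p * (a ^ (p - 1) * (1 + a + b)) * (d / (1 + a + b))
        ≤ p * (3 * (1 + a ^ p)) * (d / (1 + a + b)) := by nlinarith
    calc a ^ p - b ^ p ≤ p * a ^ (p - 1) * d := le_trans h1 h2
      _ = p * (a ^ (p - 1) * (1 + a + b)) * (d / (1 + a + b)) := h3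
      _ ≤ p * (3 * (1 + a ^ p)) * (d / (1 + a + b)) := h4
      _ = 3 * p * (1 + a ^ p) * (d / (1 + a + b)) := by ring
  have hfinal : |v0s - v0t| * (1 + a ^ p)
      ≤ (2 * bd + 3 * p * C₀ * (d / (1 + a + b))) * (1 + a ^ p) := by
    have hC := mul_le_mul_of_nonneg_left hterm2 hC₀
    calc |v0s - v0t| * (1 + a ^ p)
        ≤ bd * (2 * (1 + a ^ p)) + C₀ * (3 * p * (1 + a ^ p) * (d / (1 + a + b))) := by
          linarith
      _ = (2 * bd + 3 * p * C₀ * (d / (1 + a + b))) * (1 + a ^ p) := by ring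
  exact le_of_mul_le_mul_right hfinal h1ap

/-- conversely, if `v(s) = v₀(s)(1+|s|^p)` satisfies the weighted modulus
estimate with modulus `β`, and `v₀` is bounded by `C₀`, then `v₀` is relatively
uniformly continuous with some modulus `α`. -/
theorem stmt2 {M N : ℕ} (p : ℝ) (hp : 1 ≤ p)
    (v₀ : Mat M N → ℝ) (C₀ : ℝ) (hv₀b : ∀ s, |v₀ s| ≤ C₀)
    (v : Mat M N → ℝ) (hv : ∀ s, v s = v₀ s * (1 + fnorm s ^ p))
    (β : ℝ → ℝ) (hβc : Continuous β) (hβ0 : β 0 = 0) (hβnn : ∀ x, 0 ≤ x → 0 ≤ β x)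
    (hβ : ∀ s t : Mat M N,
      |v s - v t| ≤ β (fnorm (s - t) / (1 + fnorm s + fnorm t))
        * (1 + fnorm s ^ p + fnorm t ^ p)) :
    ∃ α : ℝ → ℝ, Continuous α ∧ α 0 = 0 ∧ (∀ x, 0 ≤ x → 0 ≤ α x) ∧
      ∀ s t : Mat M N,
        |v₀ s - v₀ t| ≤ α (fnorm (s - t) / (1 + fnorm s + fnorm t)) := by
  have hp0 : (0:ℝ) < p := lt_of_lt_of_le one_pos hp
  have hC₀ : 0 ≤ C₀ := le_trans (abs_nonneg _) (hv₀b 0)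
  refine ⟨fun x => 2 * β x + 3 * p * C₀ * x, ?_, ?_, ?_, ?_⟩
  · exact (continuous_const.mul hβc).add (continuous_const.mul continuous_id)
  · simp [hβ0]
  · intro x hx
    have h1 := hβnn x hx
    have h2 : 0 ≤ 3 * p * C₀ * x := by positivity
    dsimp only
    linarith
  · have key : ∀ s t : Mat M N, fnorm t ≤ fnorm s →
        |v₀ s - v₀ t| ≤ 2 * β (fnorm (s - t) / (1 + fnorm s + fnorm t))
          + 3 * p * C₀ * (fnorm (s - t) / (1 + fnorm s + fnorm t)) := by
      intro s t hts
      exact key_arith p hp C₀ hC₀ (fnorm s) (fnorm t) (fnorm (s - t))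
        (v s) (v t) (v₀ s) (v₀ t) (β (fnorm (s - t) / (1 + fnorm s + fnorm t)))
        (fnorm_nonneg s) (fnorm_nonneg t) (fnorm_nonneg (s - t)) hts
        (le_trans (le_abs_self _) (abs_fnorm_sub_le s t)) (hv₀b t)
        (hv s) (hv t)
        (hβnn _ (div_nonneg (fnorm_nonneg _) (by nlinarith [fnorm_nonneg s, fnorm_nonneg t])))
        (hβ s t)
    intro s t
    rcases le_total (fnorm t) (fnorm s) with h | h
    · exact key s t h
    · have := key t s h
      rw [abs_sub_comm, fnorm_sub_comm t s,
        show 1 + fnorm t + fnorm s = 1 + fnorm s + fnorm t by ring] at this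
      exact this
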